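/- Let κ be an infinite cardinal. Every connected κ-regular graph contains a κ-regular spanning tree. -/

import Mathlib

open Cardinal

universe u

/-- `G` is `κ`-regular: every vertex has degree (neighbourhood cardinality) exactly `κ`. -/
def SimpleGraph.CardRegular {V : Type u} (G : SimpleGraph V) (κ : Cardinal.{u}) : Prop :=
  ∀ v : V, #(G.neighborSet v) = κ

/-- `G` has no isolated vertices. -/
def SimpleGraph.NoIsolatedVerts {V : Type u} (G : SimpleGraph V) : Prop :=
  ∀ v : V, ∃ w : V, G.Adj v w

/-- A factorization of `G`: a family of spanning subgraphs, pairwise edge-disjoint,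
whose edge sets cover `E(G)`. -/
def SimpleGraph.IsFactorization {V : Type u} {ι : Type u} (G : SimpleGraph V)
    (F : ι → SimpleGraph V) : Prop :=
  (∀ i, F i ≤ G) ∧ (Pairwise fun i j => Disjoint (F i).edgeSet (F j).edgeSet) ∧
    (⋃ i, (F i).edgeSet) = G.edgeSet

/-- In the forest `F` rooted at `v₀`, `u` is a child of `w`. -/
def SimpleGraph.IsChild {V : Type u} (F : SimpleGraph V) (v₀ u w : V) : Prop :=
  F.Adj w u ∧ F.Reachable v₀ u ∧ F.dist v₀ u = F.dist v₀ w + 1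

/-- The graph with edges `v_j v_i` for `v_i ∈ C j`, `j < i`. -/
def childGraph {V I : Type u} [LT I] (v : I ≃ V) (C : I → Set V) : SimpleGraph V :=
  SimpleGraph.fromEdgeSet {e | ∃ i j : I, j < i ∧ (v i : V) ∈ C j ∧ e = s(v j, v i)}

/-- Disjoint union of `ι`-many copies of `T`. -/
def copiesGraph (ι : Type u) {W : Type u} (T : SimpleGraph W) : SimpleGraph (ι × W) where
  Adj p q := p.1 = q.1 ∧ T.Adj p.2 q.2
  symm := by constructor; rintro p q ⟨h1, h2⟩; exact ⟨h1.symm, h2.symm⟩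
  loopless := by constructor; rintro p ⟨-, h⟩; exact T.irrefl h

lemma greedy_inj {κ : Cardinal.{u}} (hκ : ℵ₀ ≤ κ) {X : Type u}
    (A : κ.ord.ToType → Set X) (hA : ∀ t, κ ≤ #(A t)) :
    ∃ s : κ.ord.ToType → X, Function.Injective s ∧ ∀ t, s t ∈ A t := by
  classical
  have wf : WellFounded ((· < ·) : κ.ord.ToType → κ.ord.ToType → Prop) := wellFounded_lt
  have hAne : ∀ t, (A t).Nonempty := by
    intro t
    rw [Set.nonempty_iff_ne_empty]
    intro h
    have := hA t
    rw [h] at this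
    simp only [mk_emptyCollection] at this
    exact (aleph0_pos.trans_le hκ).not_ge this
  set F : ∀ i : κ.ord.ToType, (∀ j : κ.ord.ToType, j < i → X) → X := fun i rec =>
    if h : ((A i) \ (Set.range fun j : {j // j < i} => rec j.1 j.2)).Nonempty
    then h.choose else (hAne i).choose with hF
  set s : κ.ord.ToType → X := wf.fix F with hs
  have hfix : ∀ i, s i = F i fun j _ => s j := fun i => wf.fix_eq F i
  have hsmall : ∀ i : κ.ord.ToType, #(Set.range fun j : {j // j < i} => s j) < κ := by
    intro i
    refine (mk_range_le).trans_lt ?_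
    exact (Cardinal.mk_Iio_ord_toType i)
  have hne : ∀ i, ((A i) \ (Set.range fun j : {j // j < i} => s j)).Nonempty := by
    intro i
    rw [Set.diff_nonempty]
    intro hsub
    exact absurd ((hA i).trans (mk_le_mk_of_subset hsub)) (hsmall i).not_ge
  have hmem : ∀ i, s i ∈ (A i) \ (Set.range fun j : {j // j < i} => s j) := by
    intro i
    rw [hfix i]
    simp only [hF]
    rw [dif_pos (hne i)]
    exact (hne i).choose_spec
  refine ⟨s, ?_, fun t => (hmem t).1⟩
  intro a b hab
  rcases lt_trichotomy a b with h | h | h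
  · exact ((hmem b).2 ⟨⟨a, h⟩, hab⟩).elim
  · exact h
  · exact ((hmem a).2 ⟨⟨b, h⟩, hab.symm⟩).elim

lemma mk_Iic_lt {κ : Cardinal.{u}} (hκ : ℵ₀ ≤ κ) (t : κ.ord.ToType) : #(Set.Iic t) < κ := by
  have : (Set.Iic t : Set κ.ord.ToType) = insert t (Set.Iio t) := by
    ext x; simp [le_iff_lt_or_eq, or_comm]
  rw [this]
  refine (mk_insert_le).trans_lt ?_
  exact Cardinal.add_lt_of_lt hκ (Cardinal.mk_Iio_ord_toType t) (one_lt_aleph0.trans_le hκ)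

lemma card_vertex {κ : Cardinal.{u}} (hκ : ℵ₀ ≤ κ) {V : Type u} (G : SimpleGraph V)
    (hconn : G.Connected) (hreg : G.CardRegular κ) : #V = κ := by
  obtain ⟨v₀⟩ := hconn.nonempty
  refine le_antisymm ?_ ((hreg v₀) ▸ mk_set_le _)
  set S : ℕ → Set V := fun n => {v | ∃ w : G.Walk v₀ v, w.length ≤ n} with hSdef
  have hS : ∀ n, #(S n) ≤ κ := by
    intro n
    induction n with
    | zero =>
      have : S 0 ⊆ {v₀} := by
        rintro v ⟨w, hw⟩
        exact (SimpleGraph.Walk.eq_of_length_eq_zero (Nat.le_zero.1 hw)).symm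
      exact (mk_le_mk_of_subset this).trans (by simpa using one_le_aleph0.trans hκ)
    | succ n ih =>
      have hsub : S (n + 1) ⊆ ⋃ u : S n, insert u.1 (G.neighborSet u.1) := by
        rintro v ⟨w, hw⟩
        have : v ∈ S n ∨ ∃ u, u ∈ S n ∧ G.Adj u v := by
          cases hrev : w.reverse with
          | nil =>
            exact Or.inl ⟨SimpleGraph.Walk.nil, by simp⟩
          | cons h p =>
            right
            refine ⟨_, ⟨p.reverse, ?_⟩, h.symm⟩
            have := congrArg SimpleGraph.Walk.length hrev
            rw [SimpleGraph.Walk.length_reverse, SimpleGraph.Walk.length_cons] at this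
            rw [SimpleGraph.Walk.length_reverse]
            omega
        rcases this with hv | ⟨u, hu, hadj⟩
        · exact Set.mem_iUnion.2 ⟨⟨v, hv⟩, by simp⟩
        · exact Set.mem_iUnion.2 ⟨⟨u, hu⟩, Set.mem_insert_iff.2 (Or.inr hadj)⟩
      refine (mk_le_mk_of_subset hsub).trans ?_
      refine (mk_iUnion_le _).trans ?_
      have h1 : #(S n) ≤ κ := ih
      have h2 : ⨆ u : S n, #(insert u.1 (G.neighborSet u.1) : Set V) ≤ κ := by
        refine ciSup_le' fun u => ?_
        refine mk_insert_le.trans ?_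
        rw [hreg u.1]
        exact (add_le_add_right (one_le_aleph0.trans hκ) κ).trans (add_eq_self hκ).le
      calc #(S n) * ⨆ u : S n, #(insert u.1 (G.neighborSet u.1) : Set V)
          ≤ κ * κ := mul_le_mul' h1 h2
        _ = κ := mul_eq_self hκ
  have huniv : (⋃ n : ULift.{u} ℕ, S n.down) = Set.univ := by
    refine Set.eq_univ_of_forall fun v => ?_
    obtain ⟨w⟩ := hconn.preconnected v₀ v
    exact Set.mem_iUnion.2 ⟨⟨w.length⟩, w, le_rfl⟩
  calc #V = #(⋃ n : ULift.{u} ℕ, S n.down) := by rw [huniv]; exact mk_univ.symm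
    _ ≤ #(ULift.{u} ℕ) * ⨆ n : ULift.{u} ℕ, #(S n.down) := mk_iUnion_le _
    _ ≤ ℵ₀ * κ := by
        refine mul_le_mul' (by simp) (ciSup_le' fun n => hS n.down)
    _ = κ := by rw [mul_eq_max le_rfl hκ]; exact max_eq_right hκ

lemma exists_enum {κ : Cardinal.{u}} (hκ : ℵ₀ ≤ κ) {V : Type u} (G : SimpleGraph V)
    (hconn : G.Connected) (hV : #V = κ) :
    ∃ f : κ.ord.ToType → V, Function.Bijective f ∧
      ∀ i, (∃ j, j < i) → ∃ j, j < i ∧ G.Adj (f j) (f i) := by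
  classical
  have e : κ.ord.ToType ≃ V :=
    Classical.choice (Cardinal.eq.1 ((mk_ord_toType κ).trans hV.symm))
  have wf : WellFounded ((· < ·) : κ.ord.ToType → κ.ord.ToType → Prop) := wellFounded_lt
  set F : ∀ i : κ.ord.ToType, (∀ j, j < i → V) → V := fun i rec =>
    if h : {t | e t ∉ (Set.range fun j : {j // j < i} => rec j.1 j.2) ∧
        ((∃ j, j < i) → ∃ j : {j // j < i}, G.Adj (rec j.1 j.2) (e t))}.Nonempty
    then e (wf.min _ h) else e i with hF
  set f : κ.ord.ToType → V := wf.fix F with hf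
  have hfix : ∀ i, f i = F i fun j _ => f j := fun i => wf.fix_eq F i
  set img : κ.ord.ToType → Set V := fun i => Set.range fun j : {j // j < i} => f j.1 with himg
  set Q : κ.ord.ToType → Set κ.ord.ToType := fun i =>
    {t | e t ∉ img i ∧ ((∃ j, j < i) → ∃ j : {j // j < i}, G.Adj (f j.1) (e t))} with hQ
  have himg_small : ∀ i, #(img i) < κ := fun i =>
    (mk_range_le).trans_lt (Cardinal.mk_Iio_ord_toType i)
  have hQne : ∀ i, (Q i).Nonempty := by
    intro i
    have hunused : ∃ v : V, v ∉ img i := by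
      by_contra h
      push_neg at h
      have : (Set.univ : Set V) ⊆ img i := fun v _ => h v
      have := (mk_le_mk_of_subset this).trans_lt (himg_small i)
      rw [mk_univ, hV] at this
      exact this.false
    by_cases hj : ∃ j, j < i
    · obtain ⟨j₀, hj₀⟩ := hj
      obtain ⟨b, hb⟩ := hunused
      have ha : f j₀ ∈ img i := ⟨⟨j₀, hj₀⟩, rfl⟩
      obtain ⟨w⟩ := hconn.preconnected (f j₀) b
      obtain ⟨d, _, hd1, hd2⟩ := w.exists_boundary_dart (img i) ha hb
      obtain ⟨⟨j, hji⟩, hdj⟩ := hd1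
      refine ⟨e.symm d.snd, ?_, fun _ => ⟨⟨j, hji⟩, ?_⟩⟩
      · rwa [Equiv.apply_symm_apply]
      · rw [Equiv.apply_symm_apply]
        show G.Adj (f j) d.snd
        have h' : f j = d.fst := hdj
        rw [h']
        exact d.adj
    · obtain ⟨b, hb⟩ := hunused
      exact ⟨e.symm b, by rwa [Equiv.apply_symm_apply], fun h => absurd h hj⟩
  have hval : ∀ i, f i = e (wf.min (Q i) (hQne i)) := by
    intro i
    rw [hfix i, hF]
    exact dif_pos (hQne i)
  have hmem : ∀ i, e.symm (f i) ∈ Q i := by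
    intro i
    rw [hval i, Equiv.symm_apply_apply]
    exact wf.min_mem _ (hQne i)
  have hmin : ∀ i, ∀ t ∈ Q i, e.symm (f i) ≤ t := by
    intro i t ht
    rw [hval i, Equiv.symm_apply_apply]
    exact not_lt.1 (wf.not_lt_min _ ht)
  have hnotimg : ∀ i, f i ∉ img i := by
    intro i
    have := (hmem i).1
    rwa [Equiv.apply_symm_apply] at this
  have hinj : Function.Injective f := by
    intro a b hab
    rcases lt_trichotomy a b with h | h | h
    · exact ((hnotimg b) ⟨⟨a, h⟩, hab⟩).elim
    · exact h
    · exact ((hnotimg a) ⟨⟨b, h⟩, hab.symm⟩).elim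
  have hadj : ∀ i, (∃ j, j < i) → ∃ j, j < i ∧ G.Adj (f j) (f i) := by
    intro i hi
    obtain ⟨⟨j, hji⟩, hadj⟩ := (hmem i).2 hi
    rw [Equiv.apply_symm_apply] at hadj
    exact ⟨j, hji, hadj⟩
  have hsurj : Function.Surjective f := by
    by_contra hns
    simp only [Function.Surjective, not_forall] at hns
    obtain ⟨v, hv⟩ := hns
    push_neg at hv
    have hT : Nonempty κ.ord.ToType := by
      rw [Ordinal.toType_nonempty_iff_ne_zero, ne_eq, Cardinal.ord_eq_zero]
      rintro rfl
      exact (aleph0_pos.trans_le hκ).false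
    obtain ⟨i₀⟩ := hT
    obtain ⟨w⟩ := hconn.preconnected (f i₀) v
    obtain ⟨d, _, hd1, hd2⟩ := w.exists_boundary_dart (Set.range f) ⟨i₀, rfl⟩
      (fun h => hv (h.choose) h.choose_spec)
    obtain ⟨j₀, hdj⟩ := hd1
    set t₂ := e.symm d.snd with ht₂
    have hbound : ∀ i, j₀ < i → e.symm (f i) ≤ t₂ := by
      intro i hji
      refine hmin i t₂ ⟨?_, fun _ => ⟨⟨j₀, hji⟩, ?_⟩⟩
      · rw [Equiv.apply_symm_apply]
        intro hmem'
        exact hd2 (by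
          obtain ⟨⟨j, _⟩, hj⟩ := hmem'
          exact ⟨j, hj⟩)
      · rw [Equiv.apply_symm_apply]
        show G.Adj (f j₀) d.snd
        rw [hdj]
        exact d.adj
    -- injection from Ioi j₀ into Iic t₂
    have hinj2 : #(Set.Ioi j₀) ≤ #(Set.Iic t₂) := by
      refine ⟨⟨fun i => ⟨e.symm (f i.1), hbound i.1 i.2⟩, ?_⟩⟩
      intro a b hab
      simp only [Subtype.mk.injEq] at hab
      exact Subtype.ext (hinj (e.symm.injective (congrArg Subtype.val hab)))
    have hIic_small : ∀ t : κ.ord.ToType, #(Set.Iic t) < κ := by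
      intro t
      have : (Set.Iic t : Set κ.ord.ToType) = insert t (Set.Iio t) := by
        ext x; simp [le_iff_lt_or_eq, or_comm]
      rw [this]
      refine (mk_insert_le).trans_lt ?_
      have h1 : (1 : Cardinal.{u}) < κ := one_lt_aleph0.trans_le hκ
      exact Cardinal.add_lt_of_lt hκ (Cardinal.mk_Iio_ord_toType t) h1
    have hIoi : κ ≤ #(Set.Ioi j₀) := by
      by_contra hlt
      push_neg at hlt
      have hcover : (Set.Ioi j₀ ∪ Set.Iic j₀ : Set κ.ord.ToType) = Set.univ := by
        ext x; simp [lt_or_ge]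
      have hbig : κ ≤ #((Set.Ioi j₀ ∪ Set.Iic j₀ : Set κ.ord.ToType)) := by
        rw [hcover, mk_univ, mk_ord_toType]
      have := hbig.trans (mk_union_le _ _)
      exact absurd this (Cardinal.add_lt_of_lt hκ hlt (hIic_small j₀)).not_ge
    exact absurd (hIoi.trans hinj2) (hIic_small t₂).not_ge
  exact ⟨f, ⟨hinj, hsurj⟩, hadj⟩

/-- Andersen–Thomassen 1980: every connected `κ`-regular graph (κ infinite) contains a
`κ`-regular spanning tree. -/
theorem stmt_1 (κ : Cardinal.{u}) (hκ : ℵ₀ ≤ κ) {V : Type u} (G : SimpleGraph V)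
    (hconn : G.Connected) (hreg : G.CardRegular κ) :
    ∃ F : SimpleGraph V, F ≤ G ∧ F.IsTree ∧ F.CardRegular κ := by
  classical
  have hV : #V = κ := card_vertex hκ G hconn hreg
  obtain ⟨f, hbij, hadj⟩ := exists_enum hκ G hconn hV
  have hinj : Function.Injective f := hbij.1
  set fE : κ.ord.ToType ≃ V := Equiv.ofBijective f hbij with hfE
  have hcoe : ∀ i, fE i = f i := fun _ => rfl
  have hTcard : #(κ.ord.ToType) = κ := mk_ord_toType κ
  have wf : WellFounded ((· < ·) : κ.ord.ToType → κ.ord.ToType → Prop) := wellFounded_lt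
  -- pairing equivalence
  have hpair : Nonempty (κ.ord.ToType ≃ κ.ord.ToType × κ.ord.ToType) := by
    refine Cardinal.eq.1 ?_
    simp only [mk_prod, Cardinal.lift_id]
    rw [hTcard, mul_eq_self hκ]
  obtain ⟨h⟩ := hpair
  -- the sets of later neighbours
  set N : κ.ord.ToType → Set κ.ord.ToType :=
    fun j => {i | j < i ∧ G.Adj (f j) (f i)} with hNdef
  have hN : ∀ j, κ ≤ #(N j) := by
    intro j
    have hA : #(f ⁻¹' (G.neighborSet (f j))) = κ := by
      exact (mk_preimage_of_injective_of_subset_range f (G.neighborSet (f j)) hinj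
        (by rw [hbij.2.range_eq]; exact Set.subset_univ _)).trans (hreg (f j))
    have hsub : N j = (f ⁻¹' (G.neighborSet (f j))) \ Set.Iic j := by
      ext i
      simp only [hNdef, Set.mem_setOf_eq, Set.mem_diff, Set.mem_preimage,
        SimpleGraph.mem_neighborSet, Set.mem_Iic, not_le]
      tauto
    rw [hsub]
    by_contra hlt
    push_neg at hlt
    have := le_mk_diff_add_mk (f ⁻¹' (G.neighborSet (f j))) (Set.Iic j)
    rw [hA] at this
    exact absurd this (Cardinal.add_lt_of_lt hκ hlt (mk_Iic_lt hκ j)).not_ge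
  obtain ⟨s, hsinj, hsmem⟩ := greedy_inj hκ (fun t => N ((h t).1)) (fun t => hN _)
  -- the parent function
  set parent : κ.ord.ToType → κ.ord.ToType := fun i =>
    if hi : ∃ t, s t = i then (h hi.choose).1
    else if hd : ∃ j, j < i ∧ G.Adj (f j) (f i) then hd.choose else i with hparent
  have P1 : ∀ i, (∃ j, j < i) → parent i < i ∧ G.Adj (f (parent i)) (f i) := by
    intro i hi
    by_cases hr : ∃ t, s t = i
    · have hspec := hsmem hr.choose
      rw [hr.choose_spec] at hspec
      rw [hparent]
      simp only [dif_pos hr]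
      exact ⟨hspec.1, hspec.2⟩
    · have hd : ∃ j, j < i ∧ G.Adj (f j) (f i) := hadj i hi
      rw [hparent]
      simp only [dif_neg hr, dif_pos hd]
      exact hd.choose_spec
  have P2 : ∀ t, parent (s t) = (h t).1 := by
    intro t
    have hr : ∃ t', s t' = s t := ⟨t, rfl⟩
    have : hr.choose = t := hsinj hr.choose_spec
    rw [hparent]
    simp only [dif_pos hr, this]
  -- child sets
  set C : κ.ord.ToType → Set V :=
    fun j => {x | ∃ i, (∃ j', j' < i) ∧ parent i = j ∧ x = f i} with hC
  set F : SimpleGraph V := childGraph fE C with hF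
  have memC : ∀ (jj ii : κ.ord.ToType), fE ii ∈ C jj ↔
      ((∃ j', j' < ii) ∧ parent ii = jj) := by
    intro jj ii
    constructor
    · rintro ⟨i', hlt', hpar', heq'⟩
      have : ii = i' := hinj heq'
      subst this
      exact ⟨hlt', hpar'⟩
    · rintro ⟨h1, h2⟩
      exact ⟨ii, h1, h2, rfl⟩
  have keyAdj : ∀ i, (∃ j', j' < i) → F.Adj (f (parent i)) (f i) := by
    intro i hi
    rw [hF, childGraph, SimpleGraph.fromEdgeSet_adj]
    exact ⟨⟨i, parent i, (P1 i hi).1, (memC _ _).2 ⟨hi, rfl⟩, rfl⟩, (P1 i hi).2.ne⟩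
  have edgeCases : ∀ x y, F.Adj x y → ∃ i, (∃ j', j' < i) ∧
      ((x = f (parent i) ∧ y = f i) ∨ (y = f (parent i) ∧ x = f i)) := by
    intro x y hxy
    rw [hF, childGraph, SimpleGraph.fromEdgeSet_adj] at hxy
    obtain ⟨⟨i, j, hji, hCm, hsym⟩, hne⟩ := hxy
    obtain ⟨hex, hpar⟩ := (memC j i).1 hCm
    rw [Sym2.eq_iff] at hsym
    rcases hsym with ⟨hx, hy⟩ | ⟨hx, hy⟩
    · exact ⟨i, hex, Or.inl ⟨by rw [hpar, hx]; exact hcoe j, by rw [hy]; exact hcoe i⟩⟩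
    · exact ⟨i, hex, Or.inr ⟨by rw [hpar, hy]; exact hcoe j, by rw [hx]; exact hcoe i⟩⟩
  have FleG : F ≤ G := by
    intro x y hxy
    obtain ⟨i, hex, hcase⟩ := edgeCases x y hxy
    rcases hcase with ⟨hx, hy⟩ | ⟨hx, hy⟩
    · rw [hx, hy]; exact (P1 i hex).2
    · rw [hx, hy]; exact (P1 i hex).2.symm
  -- root
  have hT : Nonempty κ.ord.ToType := by
    rw [Ordinal.toType_nonempty_iff_ne_zero, ne_eq, Cardinal.ord_eq_zero]
    rintro rfl
    exact (aleph0_pos.trans_le hκ).false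
  obtain ⟨i₀⟩ := hT
  set m : κ.ord.ToType := wf.min Set.univ ⟨i₀, trivial⟩ with hm
  have hmle : ∀ x, ¬ x < m := fun x => wf.not_lt_min Set.univ (x := x) trivial
  have reach : ∀ i, F.Reachable (f m) (f i) := by
    intro i
    induction i using WellFounded.induction wf with
    | _ x IH =>
      by_cases hx : ∃ j, j < x
      · exact (IH (parent x) (P1 x hx).1).trans (keyAdj x hx).reachable
      · push_neg at hx
        have : x = m := le_antisymm (hx m) (not_lt.1 (hmle x))
        rw [this]
  have hFconn : F.Connected := by
    rw [SimpleGraph.connected_iff]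
    refine ⟨fun x y => ?_, hconn.nonempty⟩
    have hx : f (fE.symm x) = x := fE.apply_symm_apply x
    have hy : f (fE.symm y) = y := fE.apply_symm_apply y
    rw [← hx, ← hy]
    exact (reach (fE.symm x)).symm.trans (reach (fE.symm y))
  -- down-neighbour uniqueness
  have downUnique : ∀ x y, F.Adj x y → fE.symm y < fE.symm x →
      y = f (parent (fE.symm x)) := by
    intro x y hxy hlt
    obtain ⟨i, hex, hcase⟩ := edgeCases x y hxy
    rcases hcase with ⟨hx, hy⟩ | ⟨hx, hy⟩
    · -- x = f (parent i), y = f i : then symm y = i > parent i = symm x, contradiction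
      exfalso
      have h1 : fE.symm x = parent i := by rw [hx]; exact fE.symm_apply_apply _
      have h2 : fE.symm y = i := by rw [hy]; exact fE.symm_apply_apply _
      rw [h1, h2] at hlt
      exact absurd (P1 i hex).1 hlt.asymm
    · have h2 : fE.symm x = i := by rw [hy]; exact fE.symm_apply_apply _
      rw [h2, ← hx]
  -- acyclicity
  have hFacyc : F.IsAcyclic := by
    intro x c hc
    have hxs : x ∈ c.support.toFinset := by
      rw [List.mem_toFinset]; exact c.start_mem_support
    obtain ⟨x₀, hx₀s, hmax⟩ := Finset.exists_max_image c.support.toFinset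
      (fun y => fE.symm y) ⟨x, hxs⟩
    rw [List.mem_toFinset] at hx₀s
    set c' : F.Walk x₀ x₀ := c.rotate x₀ hx₀s with hc'def
    have hc' : c'.IsCycle := hc.rotate hx₀s
    have hmax' : ∀ y ∈ c'.support, fE.symm y ≤ fE.symm x₀ := by
      intro y hy
      rw [SimpleGraph.Walk.support_eq_cons] at hy
      rcases List.mem_cons.1 hy with rfl | hy'
      · exact le_rfl
      · have h2 : y ∈ c.support.tail :=
          (SimpleGraph.Walk.support_rotate c x₀ hx₀s).mem_iff.1 hy'
        refine hmax y (List.mem_toFinset.2 ?_)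
        rw [SimpleGraph.Walk.support_eq_cons c]
        exact List.mem_cons.2 (Or.inr h2)
    clear_value c'
    clear hc'def hc hx₀s hmax hxs
    cases c' with
    | nil => exact hc'.ne_nil rfl
    | cons h1 p =>
      rename_i b
      cases hrev : p.reverse with
      | nil => exact h1.ne rfl
      | cons h2 q =>
        rename_i b₂
        have hb_mem : b ∈ (SimpleGraph.Walk.cons h1 p).support := by
          rw [SimpleGraph.Walk.support_cons]
          exact List.mem_cons.2 (Or.inr p.start_mem_support)
        have hb2_memp : b₂ ∈ p.support := by
          have : b₂ ∈ p.reverse.support := by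
            rw [hrev, SimpleGraph.Walk.support_cons]
            exact List.mem_cons.2 (Or.inr q.start_mem_support)
          rwa [SimpleGraph.Walk.support_reverse, List.mem_reverse] at this
        have hb2_mem : b₂ ∈ (SimpleGraph.Walk.cons h1 p).support := by
          rw [SimpleGraph.Walk.support_cons]
          exact List.mem_cons.2 (Or.inr hb2_memp)
        have hlt_b : fE.symm b < fE.symm x₀ :=
          lt_of_le_of_ne (hmax' b hb_mem) (fun hEq => h1.ne' (fE.symm.injective hEq))
        have hlt_b2 : fE.symm b₂ < fE.symm x₀ :=
          lt_of_le_of_ne (hmax' b₂ hb2_mem) (fun hEq => h2.ne' (fE.symm.injective hEq))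
        have hbb : b = b₂ := by
          rw [downUnique x₀ b h1 hlt_b, downUnique x₀ b₂ h2 hlt_b2]
        have hnodup : (SimpleGraph.Walk.cons h1 p).edges.Nodup :=
          hc'.isCircuit.isTrail.edges_nodup
        rw [SimpleGraph.Walk.edges_cons, List.nodup_cons] at hnodup
        refine hnodup.1 ?_
        have : s(x₀, b₂) ∈ p.reverse.edges := by
          rw [hrev, SimpleGraph.Walk.edges_cons]
          exact List.mem_cons.2 (Or.inl rfl)
        rw [SimpleGraph.Walk.edges_reverse, List.mem_reverse] at this
        rwa [← hbb] at this
  -- regularity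
  have hreg' : F.CardRegular κ := by
    intro x
    refine le_antisymm ?_ ?_
    · rw [← hV]; exact mk_set_le _
    · have hxj : f (fE.symm x) = x := fE.apply_symm_apply x
      have hmemnb : ∀ t'', f (s (h.symm (fE.symm x, t''))) ∈ F.neighborSet x := by
        intro t''
        have hst := hsmem (h.symm (fE.symm x, t''))
        have hht : (h (h.symm (fE.symm x, t''))).1 = fE.symm x := by
          rw [Equiv.apply_symm_apply]
        rw [hht] at hst
        have hpar : parent (s (h.symm (fE.symm x, t''))) = fE.symm x :=
          (P2 _).trans hht
        have hkey := keyAdj (s (h.symm (fE.symm x, t''))) ⟨fE.symm x, hst.1⟩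
        rw [hpar, hxj] at hkey
        exact hkey
      have hginj : Function.Injective
          (fun t'' => (⟨f (s (h.symm (fE.symm x, t''))), hmemnb t''⟩ : F.neighborSet x)) := by
        intro a b hab
        have h1' := hinj (congrArg Subtype.val hab)
        have h2' := hsinj h1'
        have h3' := h.symm.injective h2'
        exact congrArg Prod.snd h3'
      calc κ = #(κ.ord.ToType) := hTcard.symm
        _ ≤ #(F.neighborSet x) := mk_le_of_injective hginj
  exact ⟨F, FleG, ⟨hFconn, hFacyc⟩, hreg'⟩
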